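/- Let Z ~ ESN_k(0, Ω̄, α, τ) with density f(z) = φ_k(z; Ω̄)·Φ(α₀ + αᵀz)/Φ(τ), Ω̄ a full-rank correlation matrix, α₀ = τ√(1+αᵀΩ̄α). Then for any measurable h: ℝᵏ → ℝ for which the integrals exist, E[h(Z)·ζ₁(α₀ + αᵀZ)] = E[ζ₁(α₀ + αᵀZ)] · E[h(U)], where U ~ N_k(−τδ, Ω̄ − δδᵀ) with δ = Ω̄α/√(1+αᵀΩ̄α) and ζ₁(x) = φ(x)/Φ(x). -/

import Mathlib

open Matrix MeasureTheory Real

noncomputable def phi (x : ℝ) : ℝ := (Real.sqrt (2 * Real.pi))⁻¹ * Real.exp (-x ^ 2 / 2)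

noncomputable def Phi (x : ℝ) : ℝ := ∫ t in Set.Iic x, phi t

noncomputable def zeta1 (x : ℝ) : ℝ := phi x / Phi x

/-- Density of `N_k(0, Ω)`. -/
noncomputable def gaussPdf {k : ℕ} (Ω : Matrix (Fin k) (Fin k) ℝ) (z : Fin k → ℝ) : ℝ :=
  (2 * Real.pi) ^ (-(k : ℝ) / 2) * Ω.det ^ (-(1 : ℝ) / 2) *
    Real.exp (-(1 / 2) * (z ⬝ᵥ Ω⁻¹ *ᵥ z))

/-- Density of `ESN_k(0, Ω̄, α, τ)`. -/
noncomputable def esnPdf {k : ℕ} (Ωb : Matrix (Fin k) (Fin k) ℝ) (α : Fin k → ℝ) (τ : ℝ)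
    (z : Fin k → ℝ) : ℝ :=
  gaussPdf Ωb z * Phi (τ * Real.sqrt (1 + α ⬝ᵥ Ωb *ᵥ α) + α ⬝ᵥ z) / Phi τ

/-! ### Auxiliary lemmas -/

lemma phi_pos (x : ℝ) : 0 < phi x := by unfold phi; positivity

lemma integrable_phi : Integrable phi := by
  have h : Integrable (fun t : ℝ => Real.exp (-(1/2) * t^2)) :=
    integrable_exp_neg_mul_sq (by norm_num)
  have : phi = fun t => (Real.sqrt (2 * Real.pi))⁻¹ * Real.exp (-(1/2) * t^2) := by
    funext t; unfold phi; ring_nf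
  rw [this]
  exact h.const_mul _

lemma Phi_pos (x : ℝ) : 0 < Phi x := by
  unfold Phi
  rw [setIntegral_pos_iff_support_of_nonneg_ae]
  · have : Function.support phi = Set.univ := by
      ext t; simp [(phi_pos t).ne']
    rw [this, Set.univ_inter]
    simp [Real.volume_Iic]
  · filter_upwards with t using (phi_pos t).le
  · exact integrable_phi.integrableOn

section MatrixLemmas

variable {k : ℕ}

lemma mul_vecMulVec (M : Matrix (Fin k) (Fin k) ℝ) (u v : Fin k → ℝ) :
    M * vecMulVec u v = vecMulVec (M *ᵥ u) v := by
  ext i j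
  simp [Matrix.mul_apply, vecMulVec_apply, Matrix.mulVec, dotProduct, Finset.sum_mul, mul_assoc]

lemma vecMulVec_mul (u v : Fin k → ℝ) (M : Matrix (Fin k) (Fin k) ℝ) :
    vecMulVec u v * M = vecMulVec u (v ᵥ* M) := by
  ext i j
  simp [Matrix.mul_apply, vecMulVec_apply, Matrix.vecMul, dotProduct, Finset.mul_sum, mul_assoc]

lemma vecMulVec_mulVec (u v w : Fin k → ℝ) :
    vecMulVec u v *ᵥ w = (v ⬝ᵥ w) • u := by
  ext i
  simp [Matrix.mulVec, vecMulVec_apply, dotProduct, Finset.mul_sum, Finset.sum_mul, mul_assoc,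
    mul_comm, mul_left_comm]

lemma vecMulVec_smul_left (c : ℝ) (u v : Fin k → ℝ) :
    vecMulVec (c • u) v = c • vecMulVec u v := by
  ext i j; simp [vecMulVec_apply, mul_assoc]

lemma vecMulVec_smul_right (c : ℝ) (u v : Fin k → ℝ) :
    vecMulVec u (c • v) = c • vecMulVec u v := by
  ext i j; simp [vecMulVec_apply]; ring

lemma det_one_add_vecMulVec (u v : Fin k → ℝ) :
    det (1 + vecMulVec u v) = 1 + v ⬝ᵥ u := by
  rw [vecMulVec_eq Unit, det_one_add_replicateCol_mul_replicateRow]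

/-- The key right-inverse identity:
`(Ω̄ - δδᵀ) (Ω̄⁻¹ + ααᵀ) = 1`. -/
lemma sigma_mul_eq_one (Ωb : Matrix (Fin k) (Fin k) ℝ) (hΩ : Ωb.PosDef) (α : Fin k → ℝ)
    (δ : Fin k → ℝ) (hδ : δ = (Real.sqrt (1 + α ⬝ᵥ Ωb *ᵥ α))⁻¹ • (Ωb *ᵥ α)) :
    (Ωb - vecMulVec δ δ) * (Ωb⁻¹ + vecMulVec α α) = 1 := by
  have hq : 0 ≤ α ⬝ᵥ Ωb *ᵥ α := by simpa using hΩ.posSemidef.dotProduct_mulVec_nonneg α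
  set q := α ⬝ᵥ Ωb *ᵥ α with hqdef
  have hs2 : Real.sqrt (1+q) ^ 2 = 1 + q := Real.sq_sqrt (by linarith)
  have hs : (0:ℝ) < Real.sqrt (1+q) := Real.sqrt_pos.2 (by linarith)
  set s := Real.sqrt (1+q)
  have hu : IsUnit Ωb.det := hΩ.det_pos.ne'.isUnit
  have hsym : Ωbᵀ = Ωb := by simpa using hΩ.1.eq
  have hinvsym : (Ωb⁻¹)ᵀ = Ωb⁻¹ := by rw [Matrix.transpose_nonsing_inv, hsym]
  have h1 : Ωb * Ωb⁻¹ = 1 := Matrix.mul_nonsing_inv _ hu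
  have h2 : (Ωb *ᵥ α) ᵥ* Ωb⁻¹ = α := by
    rw [← Matrix.mulVec_transpose, hinvsym, Matrix.mulVec_mulVec,
      Matrix.nonsing_inv_mul _ hu, Matrix.one_mulVec]
  have h3 : (Ωb *ᵥ α) ᵥ* vecMulVec α α = q • α := by
    ext j
    simp [Matrix.vecMul, vecMulVec_apply, dotProduct, Finset.sum_mul, Finset.mul_sum, hqdef,
      Matrix.mulVec, mul_comm, mul_left_comm, mul_assoc]
  have hc : s⁻¹ * s⁻¹ * (1+q) = 1 := by
    rw [← hs2]; field_simp
  rw [hδ, vecMulVec_smul_left, vecMulVec_smul_right, smul_smul, Matrix.sub_mul,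
    Matrix.smul_mul, Matrix.mul_add, Matrix.mul_add, _root_.vecMulVec_mul, _root_.vecMulVec_mul, h2, h3,
    _root_.mul_vecMulVec, h1, vecMulVec_smul_right]
  set V := vecMulVec (Ωb *ᵥ α) α
  have hV : V + q • V = (1+q) • V := by module
  rw [hV, smul_smul, hc, one_smul]
  abel

lemma sigma_inv (Ωb : Matrix (Fin k) (Fin k) ℝ) (hΩ : Ωb.PosDef) (α : Fin k → ℝ)
    (δ : Fin k → ℝ) (hδ : δ = (Real.sqrt (1 + α ⬝ᵥ Ωb *ᵥ α))⁻¹ • (Ωb *ᵥ α)) :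
    (Ωb - vecMulVec δ δ)⁻¹ = Ωb⁻¹ + vecMulVec α α :=
  Matrix.inv_eq_right_inv (sigma_mul_eq_one Ωb hΩ α δ hδ)

lemma vecMulVec_posSemidef (α : Fin k → ℝ) : (vecMulVec α α).PosSemidef := by
  refine PosSemidef.of_dotProduct_mulVec_nonneg ?_ ?_
  · ext i j; simp [vecMulVec_apply, mul_comm]
  · intro x
    have : star x ⬝ᵥ vecMulVec α α *ᵥ x = (α ⬝ᵥ x) * (α ⬝ᵥ x) := by
      rw [vecMulVec_mulVec, dotProduct_smul, smul_eq_mul]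
      simp [dotProduct_comm, mul_comm]
    rw [this]
    exact mul_self_nonneg _

lemma sigma_posDef (Ωb : Matrix (Fin k) (Fin k) ℝ) (hΩ : Ωb.PosDef) (α : Fin k → ℝ)
    (δ : Fin k → ℝ) (hδ : δ = (Real.sqrt (1 + α ⬝ᵥ Ωb *ᵥ α))⁻¹ • (Ωb *ᵥ α)) :
    (Ωb - vecMulVec δ δ).PosDef := by
  have hT : (Ωb⁻¹ + vecMulVec α α).PosDef := hΩ.inv.add_posSemidef (vecMulVec_posSemidef α)
  have h := Matrix.inv_eq_left_inv (sigma_mul_eq_one Ωb hΩ α δ hδ)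
  rw [← h]
  exact hT.inv

lemma sigma_det (Ωb : Matrix (Fin k) (Fin k) ℝ) (hΩ : Ωb.PosDef) (α : Fin k → ℝ)
    (δ : Fin k → ℝ) (hδ : δ = (Real.sqrt (1 + α ⬝ᵥ Ωb *ᵥ α))⁻¹ • (Ωb *ᵥ α)) :
    (Ωb - vecMulVec δ δ).det = Ωb.det * (1 + α ⬝ᵥ Ωb *ᵥ α)⁻¹ := by
  have hq : 0 ≤ α ⬝ᵥ Ωb *ᵥ α := by simpa using hΩ.posSemidef.dotProduct_mulVec_nonneg α
  have hu : IsUnit Ωb.det := hΩ.det_pos.ne'.isUnit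
  have hinv1 : Ωb⁻¹ *ᵥ (Ωb *ᵥ α) = α := by
    rw [Matrix.mulVec_mulVec, Matrix.nonsing_inv_mul _ hu, Matrix.one_mulVec]
  have hT : Ωb⁻¹ + vecMulVec α α = Ωb⁻¹ * (1 + vecMulVec (Ωb *ᵥ α) α) := by
    rw [Matrix.mul_add, Matrix.mul_one, _root_.mul_vecMulVec, hinv1]
  have hdetT : (Ωb⁻¹ + vecMulVec α α).det = Ωb.det⁻¹ * (1 + α ⬝ᵥ Ωb *ᵥ α) := by
    rw [hT, det_mul, Matrix.det_nonsing_inv, det_one_add_vecMulVec, Ring.inverse_eq_inv']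
  have hmul := congrArg det (sigma_mul_eq_one Ωb hΩ α δ hδ)
  rw [det_mul, det_one, hdetT] at hmul
  have h1q : (0:ℝ) < 1 + α ⬝ᵥ Ωb *ᵥ α := by linarith
  have hdet0 : Ωb.det ≠ 0 := hΩ.det_pos.ne'
  field_simp at hmul ⊢
  linarith [hmul]

/-- The exponent identity. -/
lemma exponent_identity (Ωb : Matrix (Fin k) (Fin k) ℝ) (hΩ : Ωb.PosDef) (α : Fin k → ℝ) (τ : ℝ)
    (δ : Fin k → ℝ) (hδ : δ = (Real.sqrt (1 + α ⬝ᵥ Ωb *ᵥ α))⁻¹ • (Ωb *ᵥ α)) (z : Fin k → ℝ) :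
    (z + τ • δ) ⬝ᵥ (Ωb⁻¹ + vecMulVec α α) *ᵥ (z + τ • δ)
      = z ⬝ᵥ Ωb⁻¹ *ᵥ z + (τ * Real.sqrt (1 + α ⬝ᵥ Ωb *ᵥ α) + α ⬝ᵥ z)^2 - τ^2 := by
  have hq : 0 ≤ α ⬝ᵥ Ωb *ᵥ α := by simpa using hΩ.posSemidef.dotProduct_mulVec_nonneg α
  set q := α ⬝ᵥ Ωb *ᵥ α with hqdef
  have hs2 : Real.sqrt (1+q) ^ 2 = 1 + q := Real.sq_sqrt (by linarith)
  have hs : (0:ℝ) < Real.sqrt (1+q) := Real.sqrt_pos.2 (by linarith)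
  set s := Real.sqrt (1+q)
  have hu : IsUnit Ωb.det := hΩ.det_pos.ne'.isUnit
  have hsym : Ωbᵀ = Ωb := by simpa using hΩ.1.eq
  have hinvsym : (Ωb⁻¹)ᵀ = Ωb⁻¹ := by rw [Matrix.transpose_nonsing_inv, hsym]
  have hinvδ : Ωb⁻¹ *ᵥ δ = s⁻¹ • α := by
    rw [hδ, Matrix.mulVec_smul, Matrix.mulVec_mulVec, Matrix.nonsing_inv_mul _ hu,
      Matrix.one_mulVec]
  have hδz : ∀ w : Fin k → ℝ, δ ⬝ᵥ Ωb⁻¹ *ᵥ w = s⁻¹ * (α ⬝ᵥ w) := by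
    intro w
    rw [Matrix.dotProduct_mulVec, ← Matrix.mulVec_transpose, hinvsym, hinvδ, smul_dotProduct,
      smul_eq_mul]
  have hαδ : α ⬝ᵥ δ = s⁻¹ * q := by
    rw [hδ, dotProduct_smul, smul_eq_mul, hqdef]
  have hδα : δ ⬝ᵥ α = s⁻¹ * q := by rw [dotProduct_comm, hαδ]
  have hδδ : δ ⬝ᵥ Ωb⁻¹ *ᵥ δ = s⁻¹ * (s⁻¹ * q) := by rw [hδz, hαδ]
  have hzα : z ⬝ᵥ α = α ⬝ᵥ z := dotProduct_comm _ _
  have hδΩz : δ ⬝ᵥ Ωb⁻¹ *ᵥ z = s⁻¹ * (α ⬝ᵥ z) := hδz z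
  have hzΩδ : z ⬝ᵥ Ωb⁻¹ *ᵥ δ = s⁻¹ * (α ⬝ᵥ z) := by
    rw [hinvδ, dotProduct_smul, smul_eq_mul, hzα]
  have hvv : ∀ w : Fin k → ℝ, vecMulVec α α *ᵥ w = (α ⬝ᵥ w) • α := vecMulVec_mulVec α α
  rw [Matrix.add_mulVec, hvv]
  simp only [Matrix.mulVec_add, Matrix.mulVec_smul, dotProduct_add, add_dotProduct,
    dotProduct_smul, smul_dotProduct, smul_eq_mul, hvv, hinvδ, hδΩz, hzΩδ, hδδ, hαδ, hδα, hzα]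
  have hsne : s ≠ 0 := ne_of_gt hs
  have hq' : q = s^2 - 1 := by linarith
  rw [hq']
  field_simp
  ring

end MatrixLemmas

/-! ### Gaussian normalization -/

lemma integral_comp_mulVec {k : ℕ} (A : Matrix (Fin k) (Fin k) ℝ) (hA : A.det ≠ 0)
    (f : (Fin k → ℝ) → ℝ) (hf : Continuous f) :
    ∫ x : Fin k → ℝ, f (A *ᵥ x) = |A.det|⁻¹ * ∫ y, f y := by
  have hdet : LinearMap.det (Matrix.toLin' A) = A.det := by
    rw [LinearMap.det_toLin']
  have hmap := Real.map_linearMap_volume_pi_eq_smul_volume_pi (f := Matrix.toLin' A)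
    (by rw [hdet]; exact hA)
  have hL : Continuous (Matrix.toLin' A) := LinearMap.continuous_on_pi _
  have h1 : ∫ x : Fin k → ℝ, f (A *ᵥ x) = ∫ y, f y ∂(Measure.map (Matrix.toLin' A) volume) := by
    rw [integral_map hL.measurable.aemeasurable]
    · simp [Matrix.toLin'_apply]
    · rw [hmap]
      exact (hf.aestronglyMeasurable).smul_measure _
  rw [h1, hmap, hdet, integral_smul_measure]
  rw [ENNReal.toReal_ofReal (abs_nonneg _), abs_inv, smul_eq_mul]

lemma integral_std_gauss (k : ℕ) :
    ∫ u : Fin k → ℝ, Real.exp (-(1/2) * (u ⬝ᵥ u)) = (2*Real.pi) ^ ((k:ℝ)/2) := by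
  have h1 : ∀ u : Fin k → ℝ, Real.exp (-(1/2) * (u ⬝ᵥ u))
      = ∏ i, Real.exp (-(1/2) * (u i)^2) := by
    intro u
    rw [← Real.exp_sum]
    congr 1
    simp [dotProduct, Finset.mul_sum, sq]
  simp_rw [h1]
  rw [MeasureTheory.volume_pi, integral_fintype_prod_eq_pow (ι := Fin k) (fun x : ℝ => Real.exp (-(1/2) * x^2))]
  have h3 : ∫ x : ℝ, Real.exp (-(1/2) * x^2) = Real.sqrt (2 * Real.pi) := by
    have := integral_gaussian (1/2 : ℝ)
    simp only [neg_mul] at this ⊢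
    rw [this, div_div_eq_mul_div, div_one, mul_comm]
  rw [h3, Fintype.card_fin]
  rw [show Real.sqrt (2*Real.pi) = (2*Real.pi) ^ ((1:ℝ)/2) from Real.sqrt_eq_rpow _,
    ← Real.rpow_natCast ((2*Real.pi) ^ ((1:ℝ)/2)) k, ← Real.rpow_mul (by positivity)]
  ring_nf

lemma cont_quad {k : ℕ} (M : Matrix (Fin k) (Fin k) ℝ) :
    Continuous (fun z : Fin k → ℝ => Real.exp (-(1 / 2) * (z ⬝ᵥ M *ᵥ z))) := by
  apply Real.continuous_exp.comp
  apply Continuous.mul continuous_const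
  unfold dotProduct Matrix.mulVec dotProduct
  continuity

open scoped MatrixOrder in
lemma integral_gaussPdf {k : ℕ} {S : Matrix (Fin k) (Fin k) ℝ} (hS : S.PosDef) :
    ∫ z : Fin k → ℝ, gaussPdf S z = 1 := by
  set B := CFC.sqrt S with hBdef
  have hBB : B * B = S := CFC.sqrt_mul_sqrt_self S hS.posSemidef.nonneg
  have hBps : B.PosSemidef := (CFC.sqrt_nonneg S).posSemidef
  have hdetS : 0 < S.det := hS.det_pos
  have hdetB2 : B.det * B.det = S.det := by rw [← Matrix.det_mul, hBB]
  have hdetBnn : 0 ≤ B.det := by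
    rw [hBps.1.det_eq_prod_eigenvalues]
    exact Finset.prod_nonneg fun i _ => hBps.eigenvalues_nonneg i
  have hdetB : B.det = S.det ^ ((1:ℝ)/2) := by
    rw [← Real.sqrt_eq_rpow, ← hdetB2, Real.sqrt_mul_self hdetBnn]
  have hdetBne : B.det ≠ 0 := by rw [hdetB]; positivity
  have hu : IsUnit B.det := hdetBne.isUnit
  have hBt : Bᵀ = B := by simpa using hBps.1.eq
  have hkey : B * S⁻¹ * B = 1 := by
    calc B * S⁻¹ * B = B * (B⁻¹ * B⁻¹) * B := by rw [← hBB, Matrix.mul_inv_rev]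
      _ = (B * B⁻¹) * (B⁻¹ * B) := by simp only [Matrix.mul_assoc]
      _ = 1 := by rw [Matrix.mul_nonsing_inv _ hu, Matrix.nonsing_inv_mul _ hu, Matrix.one_mul]
  have hquad : ∀ u : Fin k → ℝ, (B *ᵥ u) ⬝ᵥ S⁻¹ *ᵥ (B *ᵥ u) = u ⬝ᵥ u := by
    intro u
    rw [Matrix.mulVec_mulVec, dotProduct_comm, Matrix.dotProduct_mulVec]
    conv_lhs => rw [← hBt]
    rw [Matrix.vecMul_transpose, Matrix.mulVec_mulVec, ← Matrix.mul_assoc, hBt, hkey,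
      Matrix.one_mulVec]
  have hcv := integral_comp_mulVec B hdetBne
    (fun z => Real.exp (-(1 / 2) * (z ⬝ᵥ S⁻¹ *ᵥ z))) (cont_quad S⁻¹)
  simp only [hquad] at hcv
  rw [integral_std_gauss] at hcv
  have h5 : ∫ y : Fin k → ℝ, Real.exp (-(1/2) * (y ⬝ᵥ S⁻¹ *ᵥ y))
      = S.det ^ ((1:ℝ)/2) * (2*Real.pi) ^ ((k:ℝ)/2) := by
    rw [eq_comm, ← hdetB, ← abs_of_nonneg hdetBnn]
    rw [eq_comm, inv_mul_eq_iff_eq_mul₀ (by simpa using hdetBne)] at hcv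
    rw [← hcv]
  unfold gaussPdf
  rw [MeasureTheory.integral_const_mul, h5]
  have e1 : S.det ^ (-(1:ℝ)/2) * S.det ^ ((1:ℝ)/2) = 1 := by
    rw [← Real.rpow_add hdetS]; norm_num
  have e2 : (2*Real.pi) ^ (-(k:ℝ)/2) * (2*Real.pi) ^ ((k:ℝ)/2) = 1 := by
    rw [← Real.rpow_add (by positivity), show -(k:ℝ)/2 + (k:ℝ)/2 = 0 by ring, Real.rpow_zero]
  calc (2 * Real.pi) ^ (-(k:ℝ) / 2) * S.det ^ (-(1:ℝ) / 2) *
        (S.det ^ ((1:ℝ)/2) * (2*Real.pi) ^ ((k:ℝ)/2))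
      = ((2*Real.pi) ^ (-(k:ℝ)/2) * (2*Real.pi) ^ ((k:ℝ)/2)) *
        (S.det ^ (-(1:ℝ)/2) * S.det ^ ((1:ℝ)/2)) := by ring
    _ = 1 := by rw [e1, e2, one_mul]

/-! ### The pointwise factorization -/

lemma sigma_det_rpow {k : ℕ} (Ωb : Matrix (Fin k) (Fin k) ℝ) (hΩ : Ωb.PosDef) (α : Fin k → ℝ)
    (δ : Fin k → ℝ) (hδ : δ = (Real.sqrt (1 + α ⬝ᵥ Ωb *ᵥ α))⁻¹ • (Ωb *ᵥ α)) :
    (Ωb - vecMulVec δ δ).det ^ (-(1:ℝ)/2)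
      = Ωb.det ^ (-(1:ℝ)/2) * Real.sqrt (1 + α ⬝ᵥ Ωb *ᵥ α) := by
  have hq : 0 ≤ α ⬝ᵥ Ωb *ᵥ α := by simpa using hΩ.posSemidef.dotProduct_mulVec_nonneg α
  have h1q : (0:ℝ) < 1 + α ⬝ᵥ Ωb *ᵥ α := by linarith
  rw [sigma_det Ωb hΩ α δ hδ, Real.mul_rpow hΩ.det_pos.le (by positivity),
    Real.inv_rpow h1q.le, ← Real.rpow_neg h1q.le]
  congr 1
  rw [Real.sqrt_eq_rpow]
  norm_num

lemma pointwise_key {k : ℕ} (Ωb : Matrix (Fin k) (Fin k) ℝ) (hΩ : Ωb.PosDef) (α : Fin k → ℝ)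
    (τ : ℝ) (δ : Fin k → ℝ) (hδ : δ = (Real.sqrt (1 + α ⬝ᵥ Ωb *ᵥ α))⁻¹ • (Ωb *ᵥ α))
    (z : Fin k → ℝ) :
    zeta1 (τ * Real.sqrt (1 + α ⬝ᵥ Ωb *ᵥ α) + α ⬝ᵥ z) * esnPdf Ωb α τ z
      = (phi τ * (Real.sqrt (1 + α ⬝ᵥ Ωb *ᵥ α))⁻¹ / Phi τ) *
        gaussPdf (Ωb - vecMulVec δ δ) (z + τ • δ) := by
  have hq : 0 ≤ α ⬝ᵥ Ωb *ᵥ α := by simpa using hΩ.posSemidef.dotProduct_mulVec_nonneg α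
  have h1q : (0:ℝ) < 1 + α ⬝ᵥ Ωb *ᵥ α := by linarith
  have hs : (0:ℝ) < Real.sqrt (1 + α ⬝ᵥ Ωb *ᵥ α) := Real.sqrt_pos.2 h1q
  set s := Real.sqrt (1 + α ⬝ᵥ Ωb *ᵥ α) with hsdef
  set x := τ * s + α ⬝ᵥ z with hxdef
  have hstep1 : zeta1 x * esnPdf Ωb α τ z = gaussPdf Ωb z * phi x / Phi τ := by
    unfold zeta1 esnPdf
    rw [← hsdef, ← hxdef]
    have hx : Phi x ≠ 0 := (Phi_pos x).ne'
    field_simp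
  rw [hstep1]
  have hstep2 : gaussPdf Ωb z * phi x
      = (phi τ * s⁻¹) * gaussPdf (Ωb - vecMulVec δ δ) (z + τ • δ) := by
    unfold gaussPdf phi
    rw [sigma_inv Ωb hΩ α δ hδ, sigma_det_rpow Ωb hΩ α δ hδ, ← hsdef]
    have hexp : -(1/2) * (z ⬝ᵥ Ωb⁻¹ *ᵥ z) + (-x^2/2)
        = -τ^2/2 + (-(1/2) * ((z + τ • δ) ⬝ᵥ (Ωb⁻¹ + vecMulVec α α) *ᵥ (z + τ • δ))) := by
      have h := exponent_identity Ωb hΩ α τ δ hδ z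
      rw [← hsdef] at h
      rw [hxdef]
      linarith
    have hsne : s ≠ 0 := ne_of_gt hs
    calc (2 * Real.pi) ^ (-(k:ℝ) / 2) * Ωb.det ^ (-(1:ℝ) / 2) *
          Real.exp (-(1 / 2) * (z ⬝ᵥ Ωb⁻¹ *ᵥ z)) *
          ((Real.sqrt (2 * Real.pi))⁻¹ * Real.exp (-x ^ 2 / 2))
        = ((2 * Real.pi) ^ (-(k:ℝ) / 2) * Ωb.det ^ (-(1:ℝ) / 2) * (Real.sqrt (2 * Real.pi))⁻¹) *
          Real.exp (-(1/2) * (z ⬝ᵥ Ωb⁻¹ *ᵥ z) + (-x^2/2)) := by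
          rw [Real.exp_add]; ring
      _ = ((2 * Real.pi) ^ (-(k:ℝ) / 2) * Ωb.det ^ (-(1:ℝ) / 2) * (Real.sqrt (2 * Real.pi))⁻¹) *
          (Real.exp (-τ^2/2) *
            Real.exp (-(1/2) * ((z + τ • δ) ⬝ᵥ (Ωb⁻¹ + vecMulVec α α) *ᵥ (z + τ • δ)))) := by
          rw [← Real.exp_add, hexp]
      _ = (Real.sqrt (2 * Real.pi))⁻¹ * Real.exp (-τ ^ 2 / 2) * s⁻¹ *
          ((2 * Real.pi) ^ (-(k:ℝ) / 2) * (Ωb.det ^ (-(1:ℝ) / 2) * s) *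
            Real.exp (-(1 / 2) *
              ((z + τ • δ) ⬝ᵥ (Ωb⁻¹ + vecMulVec α α) *ᵥ (z + τ • δ)))) := by
          field_simp
  rw [hstep2]
  ring

theorem esn_expectation_factorization {k : ℕ} (Ωb : Matrix (Fin k) (Fin k) ℝ)
    (hΩ : Ωb.PosDef) (hdiag : ∀ i, Ωb i i = 1) (α : Fin k → ℝ) (τ : ℝ)
    (h : (Fin k → ℝ) → ℝ) (hmeas : Measurable h)
    (δ : Fin k → ℝ) (hδ : δ = (Real.sqrt (1 + α ⬝ᵥ Ωb *ᵥ α))⁻¹ • (Ωb *ᵥ α))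
    (hint1 : Integrable (fun z : Fin k → ℝ =>
      h z * zeta1 (τ * Real.sqrt (1 + α ⬝ᵥ Ωb *ᵥ α) + α ⬝ᵥ z) * esnPdf Ωb α τ z))
    (hint2 : Integrable (fun u : Fin k → ℝ =>
      h u * gaussPdf (Ωb - vecMulVec δ δ) (u + τ • δ))) :
    ∫ z : Fin k → ℝ,
        h z * zeta1 (τ * Real.sqrt (1 + α ⬝ᵥ Ωb *ᵥ α) + α ⬝ᵥ z) * esnPdf Ωb α τ z =
      (∫ z : Fin k → ℝ,
        zeta1 (τ * Real.sqrt (1 + α ⬝ᵥ Ωb *ᵥ α) + α ⬝ᵥ z) * esnPdf Ωb α τ z) *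
      ∫ u : Fin k → ℝ, h u * gaussPdf (Ωb - vecMulVec δ δ) (u + τ • δ) := by
  set C := phi τ * (Real.sqrt (1 + α ⬝ᵥ Ωb *ᵥ α))⁻¹ / Phi τ with hCdef
  have P := pointwise_key Ωb hΩ α τ δ hδ
  have e1 : ∫ z : Fin k → ℝ,
      h z * zeta1 (τ * Real.sqrt (1 + α ⬝ᵥ Ωb *ᵥ α) + α ⬝ᵥ z) * esnPdf Ωb α τ z
      = C * ∫ u : Fin k → ℝ, h u * gaussPdf (Ωb - vecMulVec δ δ) (u + τ • δ) := by
    rw [← MeasureTheory.integral_const_mul]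
    refine integral_congr_ae (Filter.Eventually.of_forall fun z => ?_)
    dsimp only
    rw [mul_assoc, P z]
    ring
  have e2 : ∫ z : Fin k → ℝ,
      zeta1 (τ * Real.sqrt (1 + α ⬝ᵥ Ωb *ᵥ α) + α ⬝ᵥ z) * esnPdf Ωb α τ z = C := by
    have : ∫ z : Fin k → ℝ,
        zeta1 (τ * Real.sqrt (1 + α ⬝ᵥ Ωb *ᵥ α) + α ⬝ᵥ z) * esnPdf Ωb α τ z
        = ∫ z : Fin k → ℝ, C * gaussPdf (Ωb - vecMulVec δ δ) (z + τ • δ) :=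
      integral_congr_ae (Filter.Eventually.of_forall fun z => P z)
    rw [this, MeasureTheory.integral_const_mul,
      integral_add_right_eq_self (fun u => gaussPdf (Ωb - vecMulVec δ δ) u) (τ • δ),
      integral_gaussPdf (sigma_posDef Ωb hΩ α δ hδ), mul_one]
  rw [e1, e2]
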